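/- Let λ̂_k = −2^{−n}·Σ_{t=0}^{n−1} (K_t^{(n−1)}(k−1))² for k = 1,…,n. If n is even, then λ̂_i = λ̂_{n−i+1} for i = 1,…,n/2. If n is odd, then λ̂_{(n+1)/2 − i} = λ̂_{(n+1)/2 + i} for i = 1,…,(n−1)/2, and max_{1 ≤ k ≤ n} λ̂_k = λ̂_{(n+1)/2} = −2^{−n}·C(n−1, (n−1)/2). -/

import Mathlib

/-- The Krawtchouk polynomial `K_k^{(n)}(x) = Σ_{i=0}^k (−1)^i·C(x,i)·C(n−x,k−i)`. -/
def kraw (n k x : ℕ) : ℤ :=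
  ∑ i ∈ Finset.range (k + 1),
    (-1 : ℤ) ^ i * (Nat.choose x i : ℤ) * (Nat.choose (n - x) (k - i) : ℤ)

/-- `λ̂_k = −2^{−n}·Σ_{t=0}^{n−1} (K_t^{(n−1)}(k−1))²` for `k = 1,…,n`. -/
noncomputable def lamHat (n k : ℕ) : ℝ :=
  -((2 : ℝ) ^ n)⁻¹ * ∑ t ∈ Finset.range n, ((kraw (n - 1) t (k - 1) : ℝ)) ^ 2

open Polynomial Finset

noncomputable def PP (m x : ℕ) : Polynomial ℤ := (1 - X)^x * (1 + X)^(m - x)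

lemma coeff_one_sub_X_pow (x i : ℕ) : ((1 - X : Polynomial ℤ)^x).coeff i = (-1)^i * x.choose i := by
  have h : (1 - X : Polynomial ℤ) = (-X) + 1 := by ring
  rw [h, add_pow, finset_sum_coeff]
  have : ∀ k ∈ Finset.range (x+1), ((-X : Polynomial ℤ)^k * 1^(x-k) * (x.choose k : Polynomial ℤ)).coeff i
      = (if k = i then ((-1)^i * x.choose i : ℤ) else 0) := by
    intro k _
    rw [one_pow, mul_one, neg_pow]
    have h1 : ((-1 : Polynomial ℤ))^k = C ((-1)^k) := by simp
    have h2 : ((-1 : Polynomial ℤ))^k * X^k * (x.choose k : Polynomial ℤ) = C ((-1 : ℤ)^k * (x.choose k : ℤ)) * X^k := by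
      rw [h1, map_mul, Polynomial.C_eq_natCast]; ring
    rw [h2, coeff_C_mul, coeff_X_pow]
    by_cases hk : k = i
    · subst hk; simp
    · simp [hk, Ne.symm hk]
  rw [Finset.sum_congr rfl this, Finset.sum_ite_eq' (Finset.range (x+1)) i]
  by_cases hi : i ∈ Finset.range (x+1)
  · simp [hi]
  · simp only [hi, if_false]
    rw [Finset.mem_range, not_lt] at hi
    rw [Nat.choose_eq_zero_of_lt hi]
    simp

lemma coeff_PP (m x t : ℕ) : (PP m x).coeff t = kraw m t x := by
  rw [PP, coeff_mul, Finset.Nat.sum_antidiagonal_eq_sum_range_succ_mk]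
  unfold kraw
  refine Finset.sum_congr rfl fun i hi => ?_
  rw [coeff_one_sub_X_pow, coeff_one_add_X_pow]

lemma natDegree_PP {m x : ℕ} (hx : x ≤ m) : (PP m x).natDegree = m := by
  have h1 : (1 - X : Polynomial ℤ) = -(X - 1) := by ring
  have hd1 : (1 - X : Polynomial ℤ).natDegree = 1 := by
    rw [h1, natDegree_neg]
    simpa using natDegree_X_sub_C (1 : ℤ)
  have hd2 : (1 + X : Polynomial ℤ).natDegree = 1 := by
    rw [add_comm]
    simpa using natDegree_X_add_C (1 : ℤ)
  have hne1 : (1 - X : Polynomial ℤ) ≠ 0 := fun h => by simpa [h] using hd1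
  have hne2 : (1 + X : Polynomial ℤ) ≠ 0 := fun h => by simpa [h] using hd2
  rw [PP, natDegree_mul (pow_ne_zero _ hne1) (pow_ne_zero _ hne2),
    natDegree_pow, natDegree_pow, hd1, hd2]
  omega

lemma reverse_pow' (p : Polynomial ℤ) (n : ℕ) : (p^n).reverse = p.reverse ^ n := by
  induction n with
  | zero => simpa using Polynomial.reverse_C (1 : ℤ)
  | succ n ih => rw [pow_succ, reverse_mul_of_domain, ih, pow_succ]

lemma reverse_one_sub_X : (1 - X : Polynomial ℤ).reverse = -(1 - X) := by
  have h : (1 - X : Polynomial ℤ) = C 1 + C (-1) * X := by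
    simp only [map_one, map_neg]; ring
  rw [h, reverse_C_add, reverse_mul_X, reverse_C]
  have : (C (-1 : ℤ) * X).natDegree = 1 := by
    simpa using natDegree_C_mul_X (-1 : ℤ) (by norm_num)
  rw [this]
  simp only [map_one, map_neg, map_one]
  ring

lemma reverse_one_add_X : (1 + X : Polynomial ℤ).reverse = 1 + X := by
  have h : (1 + X : Polynomial ℤ) = C 1 + C 1 * X := by
    simp only [map_one]; ring
  rw [h, reverse_C_add, reverse_mul_X, reverse_C]
  have : (C (1 : ℤ) * X).natDegree = 1 := by
    simpa using natDegree_C_mul_X (1 : ℤ) (by norm_num)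
  rw [this]
  simp only [map_one]
  ring

lemma reverse_PP (m x : ℕ) : (PP m x).reverse = (-1)^x * PP m x := by
  rw [PP, reverse_mul_of_domain, reverse_pow', reverse_pow', reverse_one_sub_X,
    reverse_one_add_X, neg_pow]
  ring

lemma coeff_PP_reflect {m x t : ℕ} (hx : x ≤ m) (ht : t ≤ m) :
    (PP m x).coeff (m - t) = (-1)^x * (PP m x).coeff t := by
  have h := congrArg (fun p => Polynomial.coeff p t) (reverse_PP m x)
  simp only [coeff_reverse, natDegree_PP hx, revAt_le ht] at h
  have h1 : ((-1 : Polynomial ℤ))^x = C ((-1)^x) := by simp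
  rw [h, h1, coeff_C_mul]

def SZ (m x : ℕ) : ℤ := ∑ t ∈ Finset.range (m + 1), (kraw m t x)^2

lemma PP_sq {m x : ℕ} (hx : x ≤ m) : PP (2*m) (2*x) = PP m x * PP m x := by
  have h : 2*m - 2*x = (m - x) + (m - x) := by omega
  rw [PP, PP, h, pow_add, two_mul, pow_add]
  ring

lemma SZ_eq {m x : ℕ} (hx : x ≤ m) : SZ m x = (-1)^x * kraw (2*m) m (2*x) := by
  rw [← coeff_PP, PP_sq hx, coeff_mul, Finset.Nat.sum_antidiagonal_eq_sum_range_succ_mk,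
    Finset.mul_sum]
  unfold SZ
  refine Finset.sum_congr rfl fun t ht => ?_
  rw [Finset.mem_range] at ht
  rw [coeff_PP_reflect hx (by omega), coeff_PP]
  have h4 : ((-1:ℤ))^(x*2) = 1 := Even.neg_one_pow ⟨x, by ring⟩
  ring_nf
  rw [h4]
  ring

lemma SZ_nonneg (m x : ℕ) : 0 ≤ SZ m x :=
  Finset.sum_nonneg fun t _ => sq_nonneg _

lemma kraw_reflect_x {m x : ℕ} (t : ℕ) (hx : x ≤ m) :
    kraw m t (m - x) = (-1)^t * kraw m t x := by
  unfold kraw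
  rw [← Finset.sum_range_reflect, Finset.mul_sum]
  refine Finset.sum_congr rfl fun i hi => ?_
  rw [Finset.mem_range] at hi
  simp only [Nat.add_sub_cancel]
  have h1 : m - (m - x) = x := by omega
  have h2 : t - (t - i) = i := by omega
  have h3 : (-1 : ℤ)^(t - i) = (-1)^t * (-1)^i := by
    have : t - i + i = t := by omega
    calc (-1 : ℤ)^(t-i) = (-1)^(t-i) * ((-1)^i * (-1)^i) := by
          rw [← pow_add]; simp [← two_mul]
      _ = (-1)^t * (-1)^i := by rw [← mul_assoc, ← pow_add, this]
  rw [h1, h2, h3]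
  ring

lemma SZ_reflect {m x : ℕ} (hx : x ≤ m) : SZ m (m - x) = SZ m x := by
  unfold SZ
  refine Finset.sum_congr rfl fun t _ => ?_
  rw [kraw_reflect_x t hx, mul_pow]
  simp [← pow_mul, pow_mul_comm']


lemma kraw_eq_coeff (n k x : ℕ) : kraw n k x = (PP n x).coeff k := (coeff_PP n x k).symm

lemma derivId (p q : ℕ) :
    (1 - X^2 : Polynomial ℤ) * derivative ((1-X)^p * (1+X)^q)
      = (C ((q:ℤ) - (p:ℤ)) - C ((p:ℤ) + (q:ℤ)) * X) * ((1-X)^p * (1+X)^q) := by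
  have d1 : derivative (1 - X : Polynomial ℤ) = -1 := by simp
  have d2 : derivative (1 + X : Polynomial ℤ) = 1 := by simp
  rw [derivative_mul, derivative_pow, derivative_pow, d1, d2]
  cases p with
  | zero =>
    cases q with
    | zero => simp
    | succ q' =>
      simp only [Nat.cast_zero, map_zero, zero_mul, pow_zero, Nat.succ_sub_one,
        Nat.cast_succ, map_sub, map_add, map_one, map_natCast, sub_zero, zero_sub,
        add_zero, zero_add, map_neg, pow_succ]
      ring
  | succ p' =>
    cases q with
    | zero =>
      simp only [Nat.cast_zero, map_zero, zero_mul, pow_zero, Nat.succ_sub_one,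
        Nat.cast_succ, map_sub, map_add, map_one, map_natCast, sub_zero, zero_sub,
        add_zero, zero_add, map_neg, pow_succ]
      ring
    | succ q' =>
      simp only [Nat.succ_sub_one, Nat.cast_succ, map_sub, map_add, map_one,
        map_natCast, pow_succ]
      ring

lemma key_rec {m x v : ℕ} (hm : m = v + 3) (h : 2*x + 2 ≤ m) :
    ((2*m : ℤ) - 2*x - 1) * kraw (2*m) m (2*x+2) = -((2*x+1 : ℤ)) * kraw (2*m) m (2*x) := by
  set A : Polynomial ℤ := (1-X)^(2*x) * (1+X)^(2*m-2*x-2) with hA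
  have h2C : (C 2 : Polynomial ℤ) = 2 := by norm_num
  have hsq1 : PP (2*m) (2*x+2) = A - C 2 * (X * A) + X^2 * A := by
    rw [PP, hA]
    have e1 : 2*m - (2*x+2) = 2*m-2*x-2 := by omega
    have e2 : (1 - X : Polynomial ℤ)^(2*x+2) = (1-X)^(2*x) * (1-X)^2 := by rw [← pow_add]
    rw [e1, e2, h2C]
    ring
  have hsq2 : PP (2*m) (2*x) = A + C 2 * (X * A) + X^2 * A := by
    rw [PP, hA]
    have e2 : (1 + X : Polynomial ℤ)^(2*m - 2*x) = (1+X)^(2*m-2*x-2) * (1+X)^2 := by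
      rw [← pow_add]; congr 1; omega
    rw [e2, h2C]
    ring
  -- coefficient facts
  have cX : ∀ (B : Polynomial ℤ), (X * B).coeff (v+3) = B.coeff (v+2) := by
    intro B
    have := Polynomial.coeff_X_mul B (v+2)
    rwa [show v+2+1 = v+3 by omega] at this
  have cX2 : ∀ (B : Polynomial ℤ), (X^2 * B).coeff (v+3) = B.coeff (v+1) := by
    intro B
    have := Polynomial.coeff_X_pow_mul B 2 (v+1)
    rwa [show v+1+2 = v+3 by omega] at this
  have hD := derivId (2*x) (2*m-2*x-2)
  rw [← hA] at hD
  have hD' := hD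
  rw [sub_mul, one_mul, sub_mul, mul_assoc] at hD'
  have hE := congrArg (fun pp => Polynomial.coeff pp (v+2)) hD'
  simp only [coeff_sub, coeff_C_mul] at hE
  have e4 : (X^2 * derivative A).coeff (v+2) = (derivative A).coeff v := by
    have := Polynomial.coeff_X_pow_mul (derivative A) 2 v
    rwa [show v+2 = v+2 by rfl] at this
  have e5 : (X * A).coeff (v+2) = A.coeff (v+1) := by
    have := Polynomial.coeff_X_mul A (v+1)
    rwa [show v+1+1 = v+2 by omega] at this
  rw [e4, e5, Polynomial.coeff_derivative, Polynomial.coeff_derivative] at hE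
  -- hE : A.coeff (v+2+1) * (v+2+1) - A.coeff (v+1) * (v+1) = c1 * A.coeff (v+2) - c2 * A.coeff (v+1)
  rw [show (v+2)+1 = v+3 by omega, show v+1 = v+1 by rfl] at hE
  have hk1 : kraw (2*m) m (2*x+2) = A.coeff (v+3) - 2 * A.coeff (v+2) + A.coeff (v+1) := by
    rw [kraw_eq_coeff, hsq1, hm, coeff_add, coeff_sub, coeff_C_mul, cX A, cX2 A]
  have hk2 : kraw (2*m) m (2*x) = A.coeff (v+3) + 2 * A.coeff (v+2) + A.coeff (v+1) := by
    rw [kraw_eq_coeff, hsq2, hm, coeff_add, coeff_add, coeff_C_mul, cX A, cX2 A]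
  have hc : ((2*m-2*x-2 : ℕ) : ℤ) = 2*(m:ℤ) - 2*(x:ℤ) - 2 := by omega
  rw [hc] at hE
  push_cast at hE
  have hmv : ((v:ℕ) : ℤ) = (m:ℤ) - 3 := by omega
  rw [hk1, hk2]
  linear_combination 2*hE - 2*(A.coeff (v+3) - A.coeff (v+1))*hmv

lemma kraw_zero (n k : ℕ) : kraw n k 0 = (n.choose k : ℤ) := by
  unfold kraw
  rw [Finset.sum_eq_single 0]
  · simp
  · intro i hi hne
    simp [Nat.choose_eq_zero_of_lt (Nat.pos_of_ne_zero hne)]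
  · simp

lemma SZ_rec {m x : ℕ} (h : 2*x + 2 ≤ m) :
    (2*(m:ℤ) - 2*(x:ℤ) - 1) * SZ m (x+1) = (2*(x:ℤ)+1) * SZ m x := by
  by_cases hm3 : 3 ≤ m
  · have h1 : SZ m (x+1) = (-1)^(x+1) * kraw (2*m) m (2*(x+1)) := SZ_eq (by omega)
    have h2 : SZ m x = (-1)^x * kraw (2*m) m (2*x) := SZ_eq (by omega)
    have hk := key_rec (v := m - 3) (by omega) h
    rw [h1, h2, show 2*(x+1) = 2*x+2 by ring, pow_succ]
    linear_combination (-(-1:ℤ)^x) * hk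
  · have hm2 : m = 2 ∧ x = 0 := by omega
    obtain ⟨rfl, rfl⟩ := hm2
    decide

lemma SZ_closed {m x : ℕ} (h2 : 2*x ≤ m) :
    ((m.choose x : ℤ)) * SZ m x
      = (((2*x).choose x : ℤ)) * (((2*(m-x)).choose (m-x) : ℤ)) := by
  induction x with
  | zero =>
    simp only [Nat.choose_zero_right, Nat.cast_one, one_mul, mul_zero, Nat.sub_zero,
      Nat.choose_self]
    rw [SZ_eq (by omega), kraw_zero]
    simp
  | succ x ih =>
    have hx : 2*x ≤ m := by omega
    have ih' := ih hx
    obtain ⟨w, rfl⟩ : ∃ w, m = x + w + 2 := ⟨m - x - 2, by omega⟩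
    have hrec := SZ_rec (m := x + w + 2) (x := x) (by omega)
    -- notation
    have hd1 : x + w + 2 - x = w + 2 := by omega
    have hd2 : x + w + 2 - (x + 1) = w + 1 := by omega
    rw [hd1] at ih'
    rw [hd2]
    -- central binomial identities
    have e1 : ((x:ℤ)+1) * (((2*(x+1)).choose (x+1) : ℕ) : ℤ)
        = 2*(2*(x:ℤ)+1) * (((2*x).choose x : ℕ) : ℤ) := by
      have := Nat.succ_mul_centralBinom_succ x
      simp only [Nat.centralBinom] at this
      exact_mod_cast this
    have e2 : ((w:ℤ)+2) * (((2*(w+2)).choose (w+2) : ℕ) : ℤ)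
        = 2*(2*(w:ℤ)+3) * (((2*(w+1)).choose (w+1) : ℕ) : ℤ) := by
      have := Nat.succ_mul_centralBinom_succ (w+1)
      simp only [Nat.centralBinom] at this
      exact_mod_cast this
    have e3 : ((x:ℤ)+1) * (((x+w+2).choose (x+1) : ℕ) : ℤ)
        = ((w:ℤ)+2) * (((x+w+2).choose x : ℕ) : ℤ) := by
      have := Nat.choose_succ_right_eq (x+w+2) x
      have hs : x + w + 2 - x = w + 2 := by omega
      rw [hs] at this
      push_cast [this]
      linarith [this]
    have e5 : (2*(w:ℤ)+3) * SZ (x+w+2) (x+1) = (2*(x:ℤ)+1) * SZ (x+w+2) x := by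
      push_cast at hrec
      linear_combination hrec
    have hc : ((x:ℤ)+1) * (((w:ℤ)+2) * ((2*(w:ℤ)+3))) ≠ 0 := by positivity
    apply mul_left_cancel₀ hc
    linear_combination (((w:ℤ)+2)*(2*(w:ℤ)+3)*(SZ (x+w+2) (x+1))) * e3
      + (((w:ℤ)+2)^2*(((x+w+2).choose x : ℕ) : ℤ)) * e5
      + (((w:ℤ)+2)^2*(2*(x:ℤ)+1)) * ih'
      - (((w:ℤ)+2)*(2*(w:ℤ)+3)*(((2*(w+1)).choose (w+1) : ℕ) : ℤ)) * e1
      + (((w:ℤ)+2)*(2*(x:ℤ)+1)*(((2*x).choose x : ℕ) : ℤ)) * e2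

lemma SZ_central (u : ℕ) : SZ (2*u) u = (((2*u).choose u : ℕ) : ℤ) := by
  have h := SZ_closed (m := 2*u) (x := u) (le_refl _)
  rw [show 2*u - u = u by omega] at h
  have hne : (((2*u).choose u : ℕ) : ℤ) ≠ 0 := by
    exact_mod_cast (Nat.choose_pos (by omega)).ne'
  exact mul_left_cancel₀ hne h

lemma SZ_step {m x : ℕ} (h : 2*x+2 ≤ m) : SZ m (x+1) ≤ SZ m x := by
  have hr := SZ_rec h
  have h0 := SZ_nonneg m x
  have h1 := SZ_nonneg m (x+1)
  have hc : (2*(x:ℤ)+2) ≤ (m:ℤ) := by exact_mod_cast h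
  nlinarith [hr]

lemma SZ_anti {u : ℕ} : ∀ d x, x + d = u → SZ (2*u) u ≤ SZ (2*u) x := by
  intro d
  induction d with
  | zero => intro x hx; rw [show x = u by omega]
  | succ d ih =>
    intro x hx
    exact le_trans (ih (x+1) (by omega)) (SZ_step (by omega))

lemma SZ_min {u x : ℕ} (hx : x ≤ 2*u) : SZ (2*u) u ≤ SZ (2*u) x := by
  by_cases h : x ≤ u
  · exact SZ_anti (u - x) x (by omega)
  · have h1 := SZ_anti (u := u) (u - (2*u - x)) (2*u - x) (by omega)
    have h2 := SZ_reflect (m := 2*u) (x := x) hx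
    rwa [h2] at h1

lemma lamHat_eq {n : ℕ} (hn : 1 ≤ n) (k : ℕ) :
    lamHat n k = -((2:ℝ)^n)⁻¹ * ((SZ (n-1) (k-1) : ℤ) : ℝ) := by
  have h : ((SZ (n-1) (k-1) : ℤ) : ℝ)
      = ∑ t ∈ Finset.range n, ((kraw (n-1) t (k-1) : ℤ) : ℝ)^2 := by
    rw [SZ, show n - 1 + 1 = n by omega]
    push_cast
    ring
  rw [lamHat, h]

/-- Symmetry and extremality of the Krawtchouk coefficients of `λ`: for even `n`,
`λ̂_i = λ̂_{n−i+1}` (`1 ≤ i ≤ n/2`); for odd `n`, `λ̂_{(n+1)/2−i} = λ̂_{(n+1)/2+i}`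
(`1 ≤ i ≤ (n−1)/2`) and `max_{1≤k≤n} λ̂_k = λ̂_{(n+1)/2} = −2^{−n}·C(n−1,(n−1)/2)`. -/
theorem lamHat_symmetry (n : ℕ) :
    (Even n → ∀ i : ℕ, 1 ≤ i → i ≤ n / 2 → lamHat n i = lamHat n (n - i + 1))
    ∧ (Odd n →
        (∀ i : ℕ, 1 ≤ i → i ≤ (n - 1) / 2 →
          lamHat n ((n + 1) / 2 - i) = lamHat n ((n + 1) / 2 + i))
        ∧ (∀ k : ℕ, 1 ≤ k → k ≤ n → lamHat n k ≤ lamHat n ((n + 1) / 2))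
        ∧ lamHat n ((n + 1) / 2)
            = -((2 : ℝ) ^ n)⁻¹ * Nat.choose (n - 1) ((n - 1) / 2)) := by
  constructor
  · intro hEven i hi1 hi2
    have hn2 : 2 ≤ n := by
      rcases hEven with ⟨r, hr⟩
      omega
    have hSZ : SZ (n-1) (n - i) = SZ (n-1) (i - 1) := by
      have h := SZ_reflect (m := n-1) (x := i-1) (by omega)
      rwa [show n - 1 - (i-1) = n - i by omega] at h
    rw [lamHat_eq (by omega), lamHat_eq (by omega), show n - i + 1 - 1 = n - i by omega, hSZ]
  · intro hOdd
    obtain ⟨u, rfl⟩ := hOdd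
    have hm : 2*u + 1 - 1 = 2*u := by omega
    have hhalf : (2*u + 1 + 1)/2 = u + 1 := by omega
    refine ⟨?_, ?_, ?_⟩
    · intro i hi1 hi2
      rw [show (2*u+1-1)/2 = u by omega] at hi2
      have hSZ : SZ (2*u) (u + i) = SZ (2*u) (u - i) := by
        have h := SZ_reflect (m := 2*u) (x := u - i) (by omega)
        rwa [show 2*u - (u - i) = u + i by omega] at h
      rw [lamHat_eq (by omega), lamHat_eq (by omega), hm, hhalf,
        show u + 1 - i - 1 = u - i by omega, show u + 1 + i - 1 = u + i by omega, hSZ]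
    · intro k hk1 hkn
      rw [lamHat_eq (by omega), lamHat_eq (by omega), hm, hhalf,
        show u + 1 - 1 = u by omega]
      have hZ : SZ (2*u) u ≤ SZ (2*u) (k-1) := SZ_min (by omega)
      have hR : ((SZ (2*u) u : ℤ) : ℝ) ≤ ((SZ (2*u) (k-1) : ℤ) : ℝ) := by exact_mod_cast hZ
      have hp : (0:ℝ) < ((2:ℝ)^(2*u+1))⁻¹ := by positivity
      nlinarith
    · rw [lamHat_eq (by omega), hm, hhalf, show u + 1 - 1 = u by omega, SZ_central,
        show 2*u/2 = u by omega]
      norm_num
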